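/- Assume Φ is holomorphic in the bounded domain Ω ⊂ ℂ with Φ, Φ', Φ'' extending continuously to Ω̄, its critical set H = {z̃₁, …, z̃_ℓ} = {z ∈ Ω̄ : ∂_zΦ(z) = 0} satisfies H ∩ ∂Ω = ∅ and ∂_z²Φ(z) ≠ 0 for every z ∈ H. Let g ∈ C¹(Ω̄) satisfy g = 0 on H. Then there exists a constant C > 0 such that for every z ∈ Ω ∖ H: |∂_z( g/∂_zΦ )(z)| ≤ C / ∏_{k=1}^ℓ |z − z̃_k|. -/

import Mathlib

open MeasureTheory Complex Filter Metric ENNReal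

noncomputable section

/-- Wirtinger derivative ∂_z = (1/2)(∂_{x₁} − i ∂_{x₂}). -/
def wDz (f : ℂ → ℂ) (z : ℂ) : ℂ :=
  (1 / 2 : ℂ) * (fderiv ℝ f z 1 - Complex.I * fderiv ℝ f z Complex.I)

/-- Wirtinger derivative ∂_{z̄} = (1/2)(∂_{x₁} + i ∂_{x₂}). -/
def wDzbar (f : ℂ → ℂ) (z : ℂ) : ℂ :=
  (1 / 2 : ℂ) * (fderiv ℝ f z 1 + Complex.I * fderiv ℝ f z Complex.I)

/-- Cauchy transform (∂_{z̄}^{-1} g)(z) = −(1/π) ∫_Ω g(ζ)/(ζ − z) dA(ζ). -/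
def cauchyT (Ω : Set ℂ) (g : ℂ → ℂ) (z : ℂ) : ℂ :=
  -(Real.pi : ℂ)⁻¹ * ∫ ζ in Ω, g ζ / (ζ - z)

/-- Conjugate Cauchy transform (∂_z^{-1} g)(z) = −(1/π) ∫_Ω g(ζ)/(conj ζ − conj z) dA(ζ). -/
def cauchyTbar (Ω : Set ℂ) (g : ℂ → ℂ) (z : ℂ) : ℂ :=
  -(Real.pi : ℂ)⁻¹ * ∫ ζ in Ω, g ζ / (starRingEnd ℂ ζ - starRingEnd ℂ z)

/-- R_{Φ,τ} g = e^{τ(conj Φ − Φ)} ∂_{z̄}^{-1}( g e^{τ(Φ − conj Φ)} ). -/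
def Rop (Ω : Set ℂ) (Φ : ℂ → ℂ) (τ : ℝ) (g : ℂ → ℂ) (z : ℂ) : ℂ :=
  Complex.exp ((τ : ℂ) * (starRingEnd ℂ (Φ z) - Φ z)) *
    cauchyT Ω (fun w => g w * Complex.exp ((τ : ℂ) * (Φ w - starRingEnd ℂ (Φ w)))) z

/-- R̃_{Φ,τ} g = e^{τ(conj Φ − Φ)} ∂_z^{-1}( g e^{τ(Φ − conj Φ)} ). -/
def Rtop (Ω : Set ℂ) (Φ : ℂ → ℂ) (τ : ℝ) (g : ℂ → ℂ) (z : ℂ) : ℂ :=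
  Complex.exp ((τ : ℂ) * (starRingEnd ℂ (Φ z) - Φ z)) *
    cauchyTbar Ω (fun w => g w * Complex.exp ((τ : ℂ) * (Φ w - starRingEnd ℂ (Φ w)))) z

open Topology in
private lemma aux_fderiv_bound {K : Set ℂ} (hK : IsCompact K) {g : ℂ → ℂ}
    (hg : ContDiffOn ℝ 1 g K) :
    ∃ M : ℝ, 0 ≤ M ∧ ∀ z ∈ K, K ∈ 𝓝 z → ‖fderiv ℝ g z‖ ≤ M := by
  have key : ∀ x : K, ∃ V : Set ℂ, IsOpen V ∧ (x : ℂ) ∈ V ∧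
      ∃ b : ℝ, ∀ z ∈ V ∩ K, K ∈ 𝓝 z → ‖fderiv ℝ g z‖ ≤ b := by
    rintro ⟨x, hxK⟩
    have hx : ContDiffWithinAt ℝ (0 + 1) g K x := by
      simpa using hg x hxK
    rw [contDiffWithinAt_succ_iff_hasFDerivWithinAt (by simp)] at hx
    obtain ⟨u, hu, -, f', hf', hf'c⟩ := hx
    rw [Set.insert_eq_self.mpr hxK] at hu
    obtain ⟨w, hwo, hxw, hwu⟩ := mem_nhdsWithin.mp hu
    have hcont : ContinuousWithinAt f' u x := hf'c.continuousWithinAt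
    have hev : ∀ᶠ z in 𝓝[u] x, ‖f' z‖ < ‖f' x‖ + 1 :=
      (hcont.norm).eventually_lt_const (by linarith)
    obtain ⟨w', hw'o, hxw', hw'⟩ := mem_nhdsWithin.mp hev
    refine ⟨w ∩ w', hwo.inter hw'o, ⟨hxw, hxw'⟩, ‖f' x‖ + 1, ?_⟩
    rintro z ⟨⟨hzw, hzw'⟩, hzK⟩ hzn
    have hzu : z ∈ u := hwu ⟨hzw, hzK⟩
    have hder : HasFDerivAt g (f' z) z := by
      have h1 : HasFDerivWithinAt g (f' z) (w ∩ K) z := (hf' z hzu).mono hwu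
      exact h1.hasFDerivAt (Filter.inter_mem (hwo.mem_nhds hzw) hzn)
    rw [hder.fderiv]
    exact le_of_lt (hw' ⟨hzw', hzu⟩)
  choose V hVo hVx b hb using key
  obtain ⟨t, ht⟩ := hK.elim_finite_subcover V hVo
    (fun z hz => Set.mem_iUnion.2 ⟨⟨z, hz⟩, hVx _⟩)
  refine ⟨∑ i ∈ t, max (b i) 0, Finset.sum_nonneg fun i _ => le_max_right _ _, ?_⟩
  intro z hzK hzn
  obtain ⟨i, hit, hzi⟩ := Set.mem_iUnion₂.mp (ht hzK)
  calc ‖fderiv ℝ g z‖ ≤ b i := hb i z ⟨hzi, hzK⟩ hzn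
    _ ≤ max (b i) 0 := le_max_left _ _
    _ ≤ ∑ i ∈ t, max (b i) 0 :=
        Finset.single_le_sum (fun j _ => le_max_right (b j) 0) hit

private lemma aux_lower {f : ℂ → ℂ} {a d : ℂ} (hf : HasDerivAt f d a) (hf0 : f a = 0) (hd : d ≠ 0) :
    ∃ r > 0, ∀ z ∈ Metric.ball a r, ‖d‖ / 2 * ‖z - a‖ ≤ ‖f z‖ := by
  have h := hasDerivAt_iff_isLittleO.mp hf
  have h2 := h.def (by have := norm_pos_iff.mpr hd; linarith : (0:ℝ) < ‖d‖ / 2)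
  rw [Metric.eventually_nhds_iff_ball] at h2
  obtain ⟨r, hr, hball⟩ := h2
  refine ⟨r, hr, fun z hz => ?_⟩
  have h3 := hball z hz
  rw [hf0, sub_zero, smul_eq_mul] at h3
  have h4 : ‖(z - a) * d‖ ≤ ‖f z‖ + ‖f z - (z - a) * d‖ := by
    calc ‖(z - a) * d‖ = ‖f z - (f z - (z - a) * d)‖ := by ring_nf
      _ ≤ ‖f z‖ + ‖f z - (z - a) * d‖ := norm_sub_le _ _
  rw [norm_mul] at h4
  nlinarith [norm_nonneg (z - a), norm_nonneg d]

private lemma aux_upper {f : ℂ → ℂ} {a : ℂ} (hf : DifferentiableAt ℝ f a) (hf0 : f a = 0) :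
    ∃ r > 0, ∃ C : ℝ, ∀ z ∈ Metric.ball a r, ‖f z‖ ≤ C * ‖z - a‖ := by
  have h := hf.hasFDerivAt.isLittleO
  have h2 := h.def one_pos
  rw [Metric.eventually_nhds_iff_ball] at h2
  obtain ⟨r, hr, hball⟩ := h2
  refine ⟨r, hr, ‖fderiv ℝ f a‖ + 1, fun z hz => ?_⟩
  have h3 := hball z hz
  rw [hf0, sub_zero, one_mul] at h3
  calc ‖f z‖ = ‖fderiv ℝ f a (z - a) + (f z - fderiv ℝ f a (z - a))‖ := by ring_nf
    _ ≤ ‖fderiv ℝ f a (z - a)‖ + ‖f z - fderiv ℝ f a (z - a)‖ := norm_add_le _ _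
    _ ≤ ‖fderiv ℝ f a‖ * ‖z - a‖ + ‖z - a‖ :=
        add_le_add ((fderiv ℝ f a).le_opNorm _) h3
    _ = (‖fderiv ℝ f a‖ + 1) * ‖z - a‖ := by ring

private lemma wDz_norm_le (f : ℂ → ℂ) (z : ℂ) : ‖wDz f z‖ ≤ ‖fderiv ℝ f z‖ := by
  rw [wDz]
  have h1 : ‖fderiv ℝ f z 1‖ ≤ ‖fderiv ℝ f z‖ := by
    simpa using (fderiv ℝ f z).le_opNorm 1
  have h2 : ‖fderiv ℝ f z Complex.I‖ ≤ ‖fderiv ℝ f z‖ := by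
    simpa [Complex.norm_I] using (fderiv ℝ f z).le_opNorm Complex.I
  calc ‖(1 / 2 : ℂ) * (fderiv ℝ f z 1 - Complex.I * fderiv ℝ f z Complex.I)‖
      = 1 / 2 * ‖fderiv ℝ f z 1 - Complex.I * fderiv ℝ f z Complex.I‖ := by
        rw [norm_mul]; norm_num
    _ ≤ 1 / 2 * (‖fderiv ℝ f z 1‖ + ‖Complex.I * fderiv ℝ f z Complex.I‖) := by
        gcongr; exact norm_sub_le _ _
    _ = 1 / 2 * (‖fderiv ℝ f z 1‖ + ‖fderiv ℝ f z Complex.I‖) := by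
        rw [norm_mul, Complex.norm_I, one_mul]
    _ ≤ ‖fderiv ℝ f z‖ := by linarith

private lemma wDz_formula {g Φ' Φ'' : ℂ → ℂ} {z : ℂ}
    (hgd : DifferentiableAt ℝ g z)
    (hΦ : HasDerivAt Φ' (Φ'' z) z) (hΦz : Φ' z ≠ 0) :
    wDz (fun w => g w / Φ' w) z
      = g z * (-(Φ'' z) / (Φ' z) ^ 2) + (Φ' z)⁻¹ * wDz g z := by
  have hfun : (fun w => g w / Φ' w) = fun w => g w * (Φ' w)⁻¹ :=
    funext fun w => div_eq_mul_inv _ _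
  rw [hfun]
  have hinv : HasDerivAt (fun w => (Φ' w)⁻¹) (-(Φ'' z) / (Φ' z) ^ 2) z := hΦ.inv hΦz
  have hinvF : HasFDerivAt (fun w => (Φ' w)⁻¹)
      ((ContinuousLinearMap.smulRight (1 : ℂ →L[ℂ] ℂ) (-(Φ'' z) / (Φ' z) ^ 2)).restrictScalars ℝ)
      z := hinv.hasFDerivAt.restrictScalars ℝ
  have hmul : HasFDerivAt (fun w => g w * (Φ' w)⁻¹) _ z := hgd.hasFDerivAt.mul hinvF
  rw [wDz, hmul.fderiv]
  simp only [ContinuousLinearMap.add_apply, ContinuousLinearMap.smul_apply,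
    ContinuousLinearMap.coe_restrictScalars', ContinuousLinearMap.smulRight_apply,
    ContinuousLinearMap.one_apply, smul_eq_mul, wDz]
  ring_nf
  linear_combination (-(1/2 : ℂ) * g z * (-(Φ'' z) / (Φ' z) ^ 2)) * Complex.I_sq

private lemma aux_key (Ω : Set ℂ) (hΩo : IsOpen Ω) (hΩb : Bornology.IsBounded Ω)
    (Φ' Φ'' : ℂ → ℂ)
    (hd2 : ∀ z ∈ Ω, HasDerivAt Φ' (Φ'' z) z)
    (hc1 : ContinuousOn Φ' (closure Ω))
    (hbd : ∀ z ∈ frontier Ω, Φ' z ≠ 0)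
    (hnd : ∀ z ∈ closure Ω, Φ' z = 0 → Φ'' z ≠ 0)
    (l : ℕ) (zt : Fin l → ℂ)
    (hzt : {z : ℂ | z ∈ closure Ω ∧ Φ' z = 0} = Set.range zt)
    (u : ℂ → ℝ) (hu : ContinuousOn u (closure Ω))
    (hloc : ∀ k : Fin l, ∃ r > 0, ∃ C : ℝ, ∀ z ∈ Metric.ball (zt k) r, u z ≤ C * ‖z - zt k‖) :
    ∃ C > 0, ∀ z ∈ closure Ω, u z ≤ C * ‖Φ' z‖ := by
  have hKc : IsCompact (closure Ω) := hΩb.isCompact_closure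
  -- facts about zt
  have hztK : ∀ k, zt k ∈ closure Ω ∧ Φ' (zt k) = 0 := by
    intro k
    have : zt k ∈ {z : ℂ | z ∈ closure Ω ∧ Φ' z = 0} := by
      rw [hzt]; exact Set.mem_range_self k
    exact this
  have hztΩ : ∀ k, zt k ∈ Ω := by
    intro k
    by_contra h
    have hfr : zt k ∈ frontier Ω := by
      rw [hΩo.frontier_eq]
      exact ⟨(hztK k).1, h⟩
    exact hbd _ hfr (hztK k).2
  -- local data near each zt k
  have hlocal : ∀ k : Fin l, ∃ r > 0, ∃ L : ℝ, 0 ≤ L ∧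
      ∀ z ∈ Metric.ball (zt k) r, u z ≤ L * ‖Φ' z‖ := by
    intro k
    have hΦ''ne : Φ'' (zt k) ≠ 0 := hnd _ (hztK k).1 (hztK k).2
    obtain ⟨r1, hr1, hlow⟩ := aux_lower (hd2 _ (hztΩ k)) (hztK k).2 hΦ''ne
    obtain ⟨r2, hr2, C2, hup⟩ := hloc k
    set c : ℝ := ‖Φ'' (zt k)‖ / 2 with hc
    have hcpos : 0 < c := by
      have := norm_pos_iff.mpr hΦ''ne; simp only [hc]; linarith
    refine ⟨min r1 r2, lt_min hr1 hr2, max C2 0 / c, div_nonneg (le_max_right _ _) hcpos.le, fun z hz => ?_⟩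
    have hz1 : z ∈ Metric.ball (zt k) r1 := Metric.ball_subset_ball (min_le_left _ _) hz
    have hz2 : z ∈ Metric.ball (zt k) r2 := Metric.ball_subset_ball (min_le_right _ _) hz
    have h1 := hlow z hz1
    have h2 := hup z hz2
    have h3 : u z ≤ max C2 0 * ‖z - zt k‖ :=
      h2.trans (mul_le_mul_of_nonneg_right (le_max_left _ _) (norm_nonneg _))
    calc u z ≤ max C2 0 * ‖z - zt k‖ := h3
      _ = max C2 0 / c * (c * ‖z - zt k‖) := by field_simp
      _ ≤ max C2 0 / c * ‖Φ' z‖ := by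
          apply mul_le_mul_of_nonneg_left h1 (div_nonneg (le_max_right _ _) hcpos.le)
  choose r hr L hL0 hLb using hlocal
  -- the compact complement
  set T : Set ℂ := closure Ω \ ⋃ k, Metric.ball (zt k) (r k) with hT
  have hTc : IsCompact T := hKc.diff (isOpen_iUnion fun k => Metric.isOpen_ball)
  have hTne0 : ∀ z ∈ T, Φ' z ≠ 0 := by
    rintro z ⟨hzK, hzb⟩ hz0
    have : z ∈ Set.range zt := by rw [← hzt]; exact ⟨hzK, hz0⟩
    obtain ⟨k, rfl⟩ := this
    exact hzb (Set.mem_iUnion.2 ⟨k, Metric.mem_ball_self (hr k)⟩)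
  have hTbd : ∃ L0 : ℝ, 0 ≤ L0 ∧ ∀ z ∈ T, u z ≤ L0 * ‖Φ' z‖ := by
    by_cases hne : T.Nonempty
    · obtain ⟨x0, hx0T, hx0min⟩ := hTc.exists_isMinOn hne
        ((hc1.mono Set.diff_subset).norm)
      set ε : ℝ := ‖Φ' x0‖ with hε
      have hεpos : 0 < ε := norm_pos_iff.mpr (hTne0 _ hx0T)
      obtain ⟨Mu, hMu⟩ := hKc.exists_bound_of_continuousOn hu
      have hMu0 : 0 ≤ Mu := (norm_nonneg _).trans (hMu x0 hx0T.1)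
      refine ⟨Mu / ε, div_nonneg hMu0 hεpos.le, fun z hzT => ?_⟩
      have h1 : u z ≤ Mu := (le_abs_self _).trans (hMu z hzT.1)
      have h2 : ε ≤ ‖Φ' z‖ := hx0min hzT
      calc u z ≤ Mu := h1
        _ = Mu / ε * ε := by field_simp
        _ ≤ Mu / ε * ‖Φ' z‖ := mul_le_mul_of_nonneg_left h2 (div_nonneg hMu0 hεpos.le)
    · exact ⟨0, le_refl _, fun z hzT => absurd ⟨z, hzT⟩ hne⟩
  obtain ⟨L0, hL00, hL0b⟩ := hTbd
  have hsum : 0 ≤ ∑ k, L k := Finset.sum_nonneg fun j _ => hL0 j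
  refine ⟨L0 + (∑ k, L k) + 1, by linarith, fun z hzK => ?_⟩
  have hCge : ∀ x : ℝ, 0 ≤ x → (x ≤ L0 + (∑ k, L k) + 1 →
      ∀ w : ℝ, 0 ≤ w → x * w ≤ (L0 + (∑ k, L k) + 1) * w) := by
    intro x _ hx w hw
    exact mul_le_mul_of_nonneg_right hx hw
  by_cases hzb : z ∈ ⋃ k, Metric.ball (zt k) (r k)
  · obtain ⟨k, hzk⟩ := Set.mem_iUnion.mp hzb
    have h1 := hLb k z hzk
    have h2 : L k ≤ L0 + (∑ k, L k) + 1 := by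
      have : L k ≤ ∑ j, L j := Finset.single_le_sum (fun j _ => hL0 j) (Finset.mem_univ k)
      linarith
    exact h1.trans (mul_le_mul_of_nonneg_right h2 (norm_nonneg _))
  · have h1 := hL0b z ⟨hzK, hzb⟩
    have h2 : L0 ≤ L0 + (∑ k, L k) + 1 := by
      have : 0 ≤ ∑ j, L j := Finset.sum_nonneg fun j _ => hL0 j
      linarith
    exact h1.trans (mul_le_mul_of_nonneg_right h2 (norm_nonneg _))

/-- Pointwise bound for the Wirtinger derivative of the quotient g/∂_zΦ when g ∈ C¹(Ω̄)
vanishes on the (nondegenerate, interior) critical set {z̃₁,…,z̃_ℓ} of Φ: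
|∂_z(g/∂_zΦ)(z)| ≤ C / ∏ₖ |z − z̃ₖ| on Ω ∖ H. -/
theorem wirtinger_quotient_bound
    (Ω : Set ℂ) (hΩo : IsOpen Ω) (hΩc : IsConnected Ω) (hΩb : Bornology.IsBounded Ω)
    (Φ Φ' Φ'' : ℂ → ℂ)
    (hd1 : ∀ z ∈ Ω, HasDerivAt Φ (Φ' z) z)
    (hd2 : ∀ z ∈ Ω, HasDerivAt Φ' (Φ'' z) z)
    (hc0 : ContinuousOn Φ (closure Ω))
    (hc1 : ContinuousOn Φ' (closure Ω))
    (hc2 : ContinuousOn Φ'' (closure Ω))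
    (hbd : ∀ z ∈ frontier Ω, Φ' z ≠ 0)
    (hnd : ∀ z ∈ closure Ω, Φ' z = 0 → Φ'' z ≠ 0)
    (l : ℕ) (zt : Fin l → ℂ) (hztinj : Function.Injective zt)
    (hzt : {z : ℂ | z ∈ closure Ω ∧ Φ' z = 0} = Set.range zt)
    (g : ℂ → ℂ) (hg : ContDiffOn ℝ 1 g (closure Ω))
    (hgH : ∀ z ∈ closure Ω, Φ' z = 0 → g z = 0) :
    ∃ C > 0, ∀ z ∈ Ω, Φ' z ≠ 0 →
      ‖wDz (fun w => g w / Φ' w) z‖ ≤ C / ∏ k, ‖z - zt k‖ := by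
  have hKc : IsCompact (closure Ω) := hΩb.isCompact_closure
  have hztK : ∀ k, zt k ∈ closure Ω ∧ Φ' (zt k) = 0 := by
    intro k
    have : zt k ∈ {z : ℂ | z ∈ closure Ω ∧ Φ' z = 0} := by
      rw [hzt]; exact Set.mem_range_self k
    exact this
  have hztΩ : ∀ k, zt k ∈ Ω := by
    intro k
    by_contra h
    exact hbd _ (by rw [hΩo.frontier_eq]; exact ⟨(hztK k).1, h⟩) (hztK k).2
  -- Lemma A : ∏ ≤ C_A * ‖Φ' z‖
  obtain ⟨CA, hCA, hA⟩ := aux_key Ω hΩo hΩb Φ' Φ'' hd2 hc1 hbd hnd l zt hzt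
    (fun z => ∏ k, ‖z - zt k‖)
    (Continuous.continuousOn (continuous_finset_prod _ fun k _ => ((continuous_id.sub continuous_const).norm)))
    (by
      intro k
      refine ⟨1, one_pos, ∏ j ∈ Finset.univ.erase k, (1 + ‖zt k - zt j‖), fun z hz => ?_⟩
      have hzk : ‖z - zt k‖ < 1 := by
        rw [Metric.mem_ball, dist_eq_norm] at hz; exact hz
      have hstep : ∀ j ∈ Finset.univ.erase k, ‖z - zt j‖ ≤ 1 + ‖zt k - zt j‖ := by
        intro j _
        calc ‖z - zt j‖ = ‖(z - zt k) + (zt k - zt j)‖ := by ring_nf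
          _ ≤ ‖z - zt k‖ + ‖zt k - zt j‖ := norm_add_le _ _
          _ ≤ 1 + ‖zt k - zt j‖ := by linarith
      calc ∏ j, ‖z - zt j‖
          = ‖z - zt k‖ * ∏ j ∈ Finset.univ.erase k, ‖z - zt j‖ :=
            (Finset.mul_prod_erase Finset.univ _ (Finset.mem_univ k)).symm
        _ ≤ ‖z - zt k‖ * ∏ j ∈ Finset.univ.erase k, (1 + ‖zt k - zt j‖) := by
            apply mul_le_mul_of_nonneg_left _ (norm_nonneg _)
            exact Finset.prod_le_prod (fun j _ => norm_nonneg _) hstep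
        _ = (∏ j ∈ Finset.univ.erase k, (1 + ‖zt k - zt j‖)) * ‖z - zt k‖ := by ring)
  -- Lemma B : ‖g z‖ ≤ C_B * ‖Φ' z‖
  obtain ⟨CB, hCB, hB⟩ := aux_key Ω hΩo hΩb Φ' Φ'' hd2 hc1 hbd hnd l zt hzt
    (fun z => ‖g z‖) (hg.continuousOn.norm)
    (by
      intro k
      have hmem : closure Ω ∈ nhds (zt k) :=
        Filter.mem_of_superset (hΩo.mem_nhds (hztΩ k)) subset_closure
      have hgd : DifferentiableAt ℝ g (zt k) :=
        (hg.contDiffAt hmem).differentiableAt one_ne_zero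
      obtain ⟨r, hr, C, hC⟩ := aux_upper hgd (hgH _ (hztK k).1 (hztK k).2)
      exact ⟨r, hr, C, hC⟩)
  -- bounds on fderiv g and Φ''
  obtain ⟨M1, hM10, hM1⟩ := aux_fderiv_bound hKc hg
  obtain ⟨M2, hM2⟩ := hKc.exists_bound_of_continuousOn hc2
  set M2' : ℝ := max M2 0 with hM2'
  have hM2'0 : 0 ≤ M2' := le_max_right _ _
  have hM2b : ∀ z ∈ closure Ω, ‖Φ'' z‖ ≤ M2' := fun z hz => (hM2 z hz).trans (le_max_left _ _)
  refine ⟨(M1 + CB * M2' + 1) * CA, by positivity, fun z hzΩ hΦz => ?_⟩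
  have hzK : z ∈ closure Ω := subset_closure hzΩ
  have hzn : closure Ω ∈ nhds z := Filter.mem_of_superset (hΩo.mem_nhds hzΩ) subset_closure
  have hΦpos : 0 < ‖Φ' z‖ := norm_pos_iff.mpr hΦz
  have hprodpos : 0 < ∏ k, ‖z - zt k‖ := by
    apply Finset.prod_pos
    intro k _
    rw [norm_pos_iff, sub_ne_zero]
    intro h
    exact hΦz (h ▸ (hztK k).2)
  have hgd : DifferentiableAt ℝ g z := ((hg.contDiffAt hzn).differentiableAt one_ne_zero)
  have hval := wDz_formula hgd (hd2 z hzΩ) hΦz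
  have hn1 : ‖wDz g z‖ ≤ M1 := (wDz_norm_le g z).trans (hM1 z hzK hzn)
  have hgz : ‖g z‖ ≤ CB * ‖Φ' z‖ := hB z hzK
  have hΦ'' : ‖Φ'' z‖ ≤ M2' := hM2b z hzK
  have hbound : ‖wDz (fun w => g w / Φ' w) z‖ ≤ (M1 + CB * M2') / ‖Φ' z‖ := by
    rw [hval]
    calc ‖g z * (-(Φ'' z) / (Φ' z) ^ 2) + (Φ' z)⁻¹ * wDz g z‖
        ≤ ‖g z * (-(Φ'' z) / (Φ' z) ^ 2)‖ + ‖(Φ' z)⁻¹ * wDz g z‖ := norm_add_le _ _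
      _ = ‖g z‖ * (‖Φ'' z‖ / ‖Φ' z‖ ^ 2) + ‖Φ' z‖⁻¹ * ‖wDz g z‖ := by
          rw [norm_mul, norm_mul, norm_div, norm_neg, norm_inv, norm_pow]
      _ ≤ (CB * ‖Φ' z‖) * (M2' / ‖Φ' z‖ ^ 2) + ‖Φ' z‖⁻¹ * M1 := by
          gcongr
      _ = (M1 + CB * M2') / ‖Φ' z‖ := by
          have hne : ‖Φ' z‖ ≠ 0 := norm_ne_zero_iff.mpr hΦz
          field_simp [hne]
          ring
  have hfin : (M1 + CB * M2') / ‖Φ' z‖ ≤ (M1 + CB * M2' + 1) * CA / ∏ k, ‖z - zt k‖ := by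
    rw [div_le_div_iff₀ hΦpos hprodpos]
    have h1 : (∏ k, ‖z - zt k‖) ≤ CA * ‖Φ' z‖ := hA z hzK
    have h2 : 0 ≤ M1 + CB * M2' := by positivity
    calc (M1 + CB * M2') * ∏ k, ‖z - zt k‖ ≤ (M1 + CB * M2') * (CA * ‖Φ' z‖) :=
          mul_le_mul_of_nonneg_left h1 h2
      _ ≤ (M1 + CB * M2' + 1) * CA * ‖Φ' z‖ := by nlinarith
  exact hbound.trans hfin

end
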